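/- Ordinal dominance is equivalent to strict tail-dominance: for counting vectors c¹, c² ∈ ℤ_{≥0}^K, the condition (⟨ν, c¹⟩ ≤ ⟨ν, c²⟩ for every strictly increasing positive ν ∈ ℝ^K, and ⟨ν*, c¹⟩ < ⟨ν*, c²⟩ for some strictly increasing positive ν*) holds if and only if (∑_{i=j}^K c¹_i ≤ ∑_{i=j}^K c²_i for all j = 1,...,K and c¹ ≠ c²). -/

import Mathlib

open Finset

private def gaux {K : ℕ} (ν : Fin K → ℝ) (m : ℕ) : ℝ :=
  if h : 0 < m ∧ m ≤ K then ν ⟨m - 1, by omega⟩ else 0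

private lemma gaux_zero {K : ℕ} (ν : Fin K → ℝ) : gaux ν 0 = 0 := by
  simp [gaux]

private lemma gaux_succ {K : ℕ} (ν : Fin K → ℝ) (j : Fin K) :
    gaux ν (j.val + 1) = ν j := by
  have h : 0 < j.val + 1 ∧ j.val + 1 ≤ K := ⟨Nat.succ_pos _, j.isLt⟩
  simp only [gaux, dif_pos h, Nat.add_sub_cancel, Fin.eta]

private lemma gaux_pos_diff {K : ℕ} {ν : Fin K → ℝ} (hpos : ∀ i, 0 < ν i)
    (hmono : StrictMono ν) (j : Fin K) : 0 < ν j - gaux ν j.val := by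
  rcases Nat.eq_zero_or_pos j.val with h | h
  · have h0 : gaux ν j.val = 0 := by rw [h]; exact gaux_zero ν
    rw [h0, sub_zero]; exact hpos j
  · have hj : j.val ≤ K := j.isLt.le
    rw [show gaux ν j.val = ν ⟨j.val - 1, by omega⟩ from dif_pos ⟨h, hj⟩]
    have hlt : (⟨j.val - 1, by omega⟩ : Fin K) < j := by
      rw [Fin.lt_def]; simp; omega
    linarith [hmono hlt]

private lemma sum_Iic_eq_range {K : ℕ} (i : Fin K) (f : ℕ → ℝ) :
    ∑ j ∈ Iic i, f j.val = ∑ m ∈ range (i.val + 1), f m := by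
  have hiK := i.isLt
  apply Finset.sum_nbij' (i := fun (j : Fin K) => (j.val : ℕ))
    (j := fun m => if h : m < K then (⟨m, h⟩ : Fin K) else i)
  · intro j hj; simp only [mem_Iic, Fin.le_def] at hj; simp [mem_range]; omega
  · intro m hm; simp only [mem_range] at hm
    have hmK : m < K := by omega
    simp [hmK, mem_Iic, Fin.le_def]; omega
  · intro j hj; simp [j.isLt]
  · intro m hm; simp only [mem_range] at hm
    have hmK : m < K := by omega
    simp [hmK]
  · intro j hj; rfl

/-- Abel summation identity. -/
private lemma abel_identity {K : ℕ} (ν : Fin K → ℝ) (c : Fin K → ℕ) :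
    ∑ i, ν i * (c i : ℝ) =
      ∑ j : Fin K, (ν j - gaux ν j.val) * ∑ i ∈ Ici j, (c i : ℝ) := by
  have h1 : ∀ i : Fin K, ν i = ∑ m ∈ range (i.val + 1), (gaux ν (m+1) - gaux ν m) := by
    intro i
    rw [Finset.sum_range_sub (fun m => gaux ν m), gaux_zero, sub_zero, gaux_succ]
  calc ∑ i, ν i * (c i : ℝ)
      = ∑ i, ∑ j ∈ Iic i, (gaux ν (j.val+1) - gaux ν j.val) * (c i : ℝ) := by
        refine Finset.sum_congr rfl fun i _ => ?_
        rw [← Finset.sum_mul, sum_Iic_eq_range i (fun m => gaux ν (m+1) - gaux ν m), ← h1]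
    _ = ∑ j : Fin K, ∑ i ∈ Ici j, (gaux ν (j.val+1) - gaux ν j.val) * (c i : ℝ) := by
        exact Finset.sum_comm' (fun x y => by simp [mem_Iic, mem_Ici, and_comm])
    _ = ∑ j : Fin K, (ν j - gaux ν j.val) * ∑ i ∈ Ici j, (c i : ℝ) := by
        refine Finset.sum_congr rfl fun j _ => ?_
        rw [← Finset.mul_sum, gaux_succ]

private lemma linmono {K : ℕ} : StrictMono (fun i : Fin K => (i.val : ℝ) + 1) := by
  intro a b hab
  have h : (a.val : ℝ) < b.val := by exact_mod_cast (Fin.lt_def.mp hab)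
  simpa using h

/-- Ordinal dominance is equivalent to strict tail-dominance. -/
theorem ordinal_dominance_iff_strict_tail (K : ℕ) (c₁ c₂ : Fin K → ℕ) :
    ((∀ ν : Fin K → ℝ, (∀ i, 0 < ν i) → StrictMono ν →
        ∑ i, ν i * (c₁ i : ℝ) ≤ ∑ i, ν i * (c₂ i : ℝ)) ∧
      (∃ ν : Fin K → ℝ, (∀ i, 0 < ν i) ∧ StrictMono ν ∧
        ∑ i, ν i * (c₁ i : ℝ) < ∑ i, ν i * (c₂ i : ℝ))) ↔
      ((∀ j : Fin K, ∑ i ∈ Finset.Ici j, c₁ i ≤ ∑ i ∈ Finset.Ici j, c₂ i) ∧ c₁ ≠ c₂) := by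
  constructor
  · rintro ⟨hall, ν₀, hpos₀, hmono₀, hstrict⟩
    constructor
    · intro j
      set A₁ : ℝ := ∑ i, ((i.val : ℝ) + 1) * (c₁ i : ℝ) with hA₁
      set A₂ : ℝ := ∑ i, ((i.val : ℝ) + 1) * (c₂ i : ℝ) with hA₂
      have key : ∀ ε : ℝ, 0 < ε →
          (∑ i ∈ Ici j, (c₁ i : ℝ)) - ∑ i ∈ Ici j, (c₂ i : ℝ) ≤ ε * (A₂ - A₁) := by
        intro ε hε
        set ν : Fin K → ℝ := fun i => ε * ((i.val : ℝ) + 1) + (if j ≤ i then 1 else 0) with hν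
        have hpos : ∀ i, 0 < ν i := by
          intro i; simp only [hν]
          have h0 : (0:ℝ) < ε * ((i.val : ℝ)+1) := by positivity
          split <;> linarith
        have hmono : StrictMono ν := by
          intro a b hab
          simp only [hν]
          have h1 : ε * ((a.val : ℝ)+1) < ε * ((b.val : ℝ)+1) :=
            (mul_lt_mul_iff_right₀ hε).mpr (linmono hab)
          have h2 : (if j ≤ a then (1:ℝ) else 0) ≤ (if j ≤ b then 1 else 0) := by
            split
            · rw [if_pos (le_trans (by assumption) hab.le)]
            · split <;> norm_num
          linarith
        have hsplit : ∀ c : Fin K → ℕ,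
            ∑ i, ν i * (c i : ℝ) =
              ε * (∑ i, ((i.val : ℝ) + 1) * (c i : ℝ)) + ∑ i ∈ Ici j, (c i : ℝ) := by
          intro c
          have hterm : ∀ i : Fin K, ν i * (c i : ℝ) =
              ε * (((i.val : ℝ) + 1) * (c i : ℝ)) + (if j ≤ i then (c i : ℝ) else 0) := by
            intro i; simp only [hν]; split <;> ring
          rw [Finset.sum_congr rfl fun i _ => hterm i, Finset.sum_add_distrib, ← Finset.mul_sum]
          congr 1
          rw [← Finset.sum_filter]
          congr 1
          ext i
          simp [mem_Ici]
        have h := hall ν hpos hmono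
        rw [hsplit c₁, hsplit c₂] at h
        rw [hA₁, hA₂]
        linarith
      have hreal : (∑ i ∈ Ici j, (c₁ i : ℝ)) ≤ ∑ i ∈ Ici j, (c₂ i : ℝ) := by
        by_contra hcon
        push_neg at hcon
        set a := (∑ i ∈ Ici j, (c₁ i : ℝ)) - ∑ i ∈ Ici j, (c₂ i : ℝ) with ha
        have hapos : 0 < a := by rw [ha]; linarith
        rcases le_or_gt (A₂ - A₁) 0 with hb0 | hb0
        · have h := key 1 one_pos; nlinarith
        · have h := key (a / (2 * (A₂ - A₁))) (by positivity)
          have : a / (2 * (A₂ - A₁)) * (A₂ - A₁) = a / 2 := by field_simp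
          rw [this] at h
          linarith
      have : ((∑ i ∈ Ici j, c₁ i : ℕ) : ℝ) ≤ ((∑ i ∈ Ici j, c₂ i : ℕ) : ℝ) := by
        push_cast
        exact hreal
      exact_mod_cast this
    · intro h
      subst h
      exact lt_irrefl _ hstrict
  · rintro ⟨htail, hne⟩
    have hstrictj : ∃ j : Fin K, ∑ i ∈ Ici j, c₁ i < ∑ i ∈ Ici j, c₂ i := by
      by_contra h
      push_neg at h
      have heq : ∀ j : Fin K, ∑ i ∈ Ici j, c₁ i = ∑ i ∈ Ici j, c₂ i :=
        fun j => le_antisymm (htail j) (h j)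
      apply hne
      funext j
      have hIci : Ici j = insert j (Ioi j) := by
        ext i
        simp only [mem_Ici, Finset.mem_insert, mem_Ioi]
        constructor
        · intro hji; rcases eq_or_lt_of_le hji with h' | h'
          · exact Or.inl h'.symm
          · exact Or.inr h'
        · rintro (rfl | h')
          · exact le_refl _
          · exact h'.le
      have hIoi : ∑ i ∈ Ioi j, c₁ i = ∑ i ∈ Ioi j, c₂ i := by
        by_cases hj : j.val + 1 < K
        · have hEq : Ioi j = Ici (⟨j.val + 1, hj⟩ : Fin K) := by
            ext i; simp only [mem_Ioi, mem_Ici, Fin.lt_def, Fin.le_def]; omega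
          rw [hEq]; exact heq _
        · have hEq : Ioi j = ∅ := by
            ext i
            simp only [mem_Ioi, Finset.notMem_empty, iff_false, Fin.lt_def]
            have := i.isLt
            omega
          simp [hEq]
      have h1 := heq j
      rw [hIci, Finset.sum_insert (by simp), Finset.sum_insert (by simp)] at h1
      omega
    obtain ⟨j₀, hj₀⟩ := hstrictj
    have hkey : ∀ ν : Fin K → ℝ, (∀ i, 0 < ν i) → StrictMono ν →
        ∑ i, ν i * (c₁ i : ℝ) < ∑ i, ν i * (c₂ i : ℝ) := by
      intro ν hpos hmono
      rw [abel_identity, abel_identity]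
      apply Finset.sum_lt_sum
      · intro j _
        apply mul_le_mul_of_nonneg_left _ (gaux_pos_diff hpos hmono j).le
        have := htail j
        have h' : ((∑ i ∈ Ici j, c₁ i : ℕ) : ℝ) ≤ ((∑ i ∈ Ici j, c₂ i : ℕ) : ℝ) := by
          exact_mod_cast this
        push_cast at h'
        exact h'
      · refine ⟨j₀, Finset.mem_univ _, ?_⟩
        apply mul_lt_mul_of_pos_left _ (gaux_pos_diff hpos hmono j₀)
        have h' : ((∑ i ∈ Ici j₀, c₁ i : ℕ) : ℝ) < ((∑ i ∈ Ici j₀, c₂ i : ℕ) : ℝ) := by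
          exact_mod_cast hj₀
        push_cast at h'
        exact h'
    refine ⟨fun ν hpos hmono => (hkey ν hpos hmono).le,
      ⟨fun i => (i.val : ℝ) + 1, fun i => by positivity, linmono, hkey _ (fun i => by positivity) linmono⟩⟩
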